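/- For every n ≥ 0 and every integer k ≥ m, the normalized Lebesgue measure of the set of x ∈ Ω whose (n+1)-th digit equals k satisfies 1/(6k²) < λ_θ({x ∈ Ω : a_{n+1}(x) = k}) < (m+1)/k². -/

import Mathlib

noncomputable section
open MeasureTheory Filter Set

namespace Theta

/-- θ = 1/√m -/
def th (m : ℕ) : ℝ := 1 / Real.sqrt m

/-- The θ-expansion map T_θ on [0,θ]. -/
def T (m : ℕ) (x : ℝ) : ℝ := if x = 0 then 0 else 1 / x - th m * ⌊1 / (x * th m)⌋₊

/-- The n-th digit a_n(x) (n ≥ 1), a_n(x) = a_1(T_θ^{n-1} x) with a_1(x) = ⌊1/(xθ)⌋. -/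
def a (m n : ℕ) (x : ℝ) : ℕ := ⌊1 / ((T m)^[n - 1] x * th m)⌋₊

/-- Ω: the irrationals in (0,θ). -/
def Omega (m : ℕ) : Set ℝ := {x | x ∈ Set.Ioo 0 (th m) ∧ Irrational x}

/-- Convergent numerators, shifted: `p m x (n+1)` is p_n(x), `p m x 0` is p_{-1} = 1. -/
def p (m : ℕ) (x : ℝ) : ℕ → ℝ
  | 0 => 1
  | 1 => 0
  | n + 2 => (a m (n + 1) x) * th m * p m x (n + 1) + p m x n

/-- Convergent denominators, shifted: `q m x (n+1)` is q_n(x), `q m x 0` is q_{-1} = 0. -/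
def q (m : ℕ) (x : ℝ) : ℕ → ℝ
  | 0 => 0
  | 1 => 1
  | n + 2 => (a m (n + 1) x) * th m * q m x (n + 1) + q m x n

/-- Normalized Lebesgue measure on [0,θ]: λ_θ(A) = Leb(A)/θ (as a real number). -/
def lam (m : ℕ) (A : Set ℝ) : ℝ := (volume A).toReal / th m



section Aux
variable {m : ℕ}

lemma m_pos (hm : 2 ≤ m) : (0:ℝ) < m := by exact_mod_cast (by omega : 0 < m)

lemma th_pos (hm : 2 ≤ m) : 0 < th m := by
  unfold th
  have := m_pos hm
  positivity

lemma th_sq (hm : 2 ≤ m) : th m * th m = 1 / m := by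
  unfold th
  rw [div_mul_div_comm, Real.mul_self_sqrt (le_of_lt (m_pos hm)), one_mul]

lemma one_div_th (hm : 2 ≤ m) : 1 / th m = m * th m := by
  have h := th_sq hm
  have hp := th_pos hm
  have hm0 := m_pos hm
  field_simp at h ⊢
  nlinarith

lemma th_lt_one (hm : 2 ≤ m) : th m < 1 := by
  have h := th_sq hm
  have hp := th_pos hm
  have hm0 : (2:ℝ) ≤ m := by exact_mod_cast hm
  have h2 : (1:ℝ)/m ≤ 1/2 := by
    apply one_div_le_one_div_of_le <;> linarith
  nlinarith

/-- digit of y in (0,θ): ⌊1/(yθ)⌋ ≥ m. -/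

lemma digit_ge (hm : 2 ≤ m) {y : ℝ} (h0 : 0 < y) (h1 : y < th m) :
    m ≤ ⌊1 / (y * th m)⌋₊ := by
  have hθ := th_pos hm
  have hyθ : 0 < y * th m := by positivity
  have hinv : (m : ℝ) ≤ 1 / (y * th m) := by
    rw [le_div_iff₀ hyθ]
    have h2 : y * th m < th m * th m := by nlinarith
    rw [th_sq hm] at h2
    have hm0 := m_pos hm
    calc (m:ℝ) * (y * th m) ≤ m * (1/m) := by nlinarith
      _ = 1 := by field_simp
  exact Nat.le_floor hinv

/-- For 0 < y, T y = 1/y - θ·⌊1/(yθ)⌋. -/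

lemma T_eq (hm : 2 ≤ m) {y : ℝ} (h0 : y ≠ 0) :
    T m y = 1 / y - th m * ⌊1 / (y * th m)⌋₊ := by simp [T, h0]

/-- floor bracketing: iθ ≤ 1/y < (i+1)θ where i = digit. -/

lemma digit_bracket (hm : 2 ≤ m) {y : ℝ} (h0 : 0 < y) :
    (⌊1 / (y * th m)⌋₊ : ℝ) * th m ≤ 1 / y ∧ 1 / y < (⌊1 / (y * th m)⌋₊ + 1 : ℝ) * th m := by
  have hθ := th_pos hm
  have hyθ : 0 < y * th m := by positivity
  have hfl : (⌊1 / (y * th m)⌋₊ : ℝ) ≤ 1 / (y * th m) := Nat.floor_le (by positivity)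
  have hfu : 1 / (y * th m) < ⌊1 / (y * th m)⌋₊ + 1 := Nat.lt_floor_add_one _
  constructor
  · calc (⌊1 / (y * th m)⌋₊ : ℝ) * th m ≤ (1 / (y * th m)) * th m := by nlinarith
      _ = 1 / y := by field_simp; try ring
  · calc 1 / y = (1 / (y * th m)) * th m := by field_simp; try ring
      _ < (⌊1 / (y * th m)⌋₊ + 1 : ℝ) * th m := by nlinarith

lemma T_mem (hm : 2 ≤ m) {y : ℝ} (hy : y ∈ Ico 0 (th m)) : T m y ∈ Ico 0 (th m) := by
  rcases eq_or_lt_of_le hy.1 with h0 | h0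
  · simp [T, ← h0, th_pos hm, le_refl]
  · rw [T_eq hm (ne_of_gt h0)]
    obtain ⟨hl, hu⟩ := digit_bracket hm h0
    constructor
    · nlinarith
    · nlinarith [th_pos hm]

lemma iter_mem (hm : 2 ≤ m) {x : ℝ} (hx : x ∈ Ioo 0 (th m)) (n : ℕ) :
    (T m)^[n] x ∈ Ico 0 (th m) := by
  induction n with
  | zero => exact ⟨le_of_lt hx.1, hx.2⟩
  | succ n ih => rw [Function.iterate_succ_apply']; exact T_mem hm ih

/-- u i s = 1/(iθ+s), the branch-i inverse. -/

def u (m i : ℕ) (s : ℝ) : ℝ := 1 / (i * th m + s)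

lemma u_pos (hm : 2 ≤ m) {i : ℕ} (hi : m ≤ i) {s : ℝ} (hs : 0 ≤ s) : 0 < u m i s := by
  have hθ := th_pos hm
  have : (0:ℝ) < i := lt_of_lt_of_le (m_pos hm) (by exact_mod_cast hi)
  unfold u; positivity

lemma u_le_th (hm : 2 ≤ m) {i : ℕ} (hi : m ≤ i) {s : ℝ} (hs : 0 ≤ s) : u m i s ≤ th m := by
  have hθ := th_pos hm
  have him : (m:ℝ) ≤ i := by exact_mod_cast hi
  have hd : 1 / th m ≤ (i:ℝ) * th m + s := by
    rw [one_div_th hm]; nlinarith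
  have hpos : (0:ℝ) < i * th m + s := by nlinarith [m_pos hm]
  rw [u, div_le_iff₀ hpos]
  have h1 : th m * (1/th m) = 1 := by field_simp
  nlinarith

lemma u_anti (hm : 2 ≤ m) {i : ℕ} (hi : m ≤ i) {s t : ℝ} (hs : 0 ≤ s) (hst : s ≤ t) :
    u m i t ≤ u m i s := by
  have hθ := th_pos hm
  have : (0:ℝ) < i := lt_of_lt_of_le (m_pos hm) (by exact_mod_cast hi)
  apply one_div_le_one_div_of_le <;> nlinarith

/-- Key branch decomposition: for y ∈ [0,θ), 0 ≤ s ≤ t ≤ θ. -/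

lemma branch_iff (hm : 2 ≤ m) {y s t : ℝ} (hy : y ∈ Ico 0 (th m))
    (hs : 0 ≤ s) (hst : s ≤ t) (ht : t ≤ th m) :
    T m y ∈ Ioo s t ↔ ∃ j : ℕ, y ∈ Ioo (u m (m + j) t) (u m (m + j) s) := by
  have hθ := th_pos hm
  constructor
  · rintro ⟨h1, h2⟩
    have hy0 : 0 < y := by
      rcases eq_or_lt_of_le hy.1 with h | h
      · exfalso; rw [← h] at h1; simp [T] at h1; linarith
      · exact h
    set i := ⌊1 / (y * th m)⌋₊ with hi
    have him : m ≤ i := digit_ge hm hy0 hy.2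
    refine ⟨i - m, ?_⟩
    rw [Nat.add_sub_cancel' him]
    rw [T_eq hm (ne_of_gt hy0)] at h1 h2
    have hiy : s + i * th m < 1/y ∧ 1/y < t + i * th m := by constructor <;> nlinarith
    have hit : (0:ℝ) < i * th m + t := by
      have : (0:ℝ) < i := lt_of_lt_of_le (m_pos hm) (by exact_mod_cast him)
      nlinarith [digit_bracket hm hy0]
    have his : (0:ℝ) < i * th m + s := by
      have : (0:ℝ) < i := lt_of_lt_of_le (m_pos hm) (by exact_mod_cast him)
      positivity
    have hyy : y * (1/y) = 1 := by field_simp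
    constructor
    · rw [u, div_lt_iff₀ hit]
      nlinarith [hiy.2]
    · rw [u, lt_div_iff₀ his]
      nlinarith [hiy.1]
  · rintro ⟨j, hj1, hj2⟩
    set i := m + j with hidef
    have him : m ≤ i := Nat.le_add_right m j
    have himr : (m:ℝ) ≤ i := by exact_mod_cast him
    have hip : (0:ℝ) < i := lt_of_lt_of_le (m_pos hm) himr
    have hit : (0:ℝ) < i * th m + t := by nlinarith
    have his : (0:ℝ) < i * th m + s := by positivity
    have hy0 : 0 < y := lt_trans (by rw [u]; positivity) hj1
    rw [u] at hj1 hj2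
    have key1 : (i:ℝ) * th m + s < 1 / y := by
      rw [lt_div_iff₀ hy0]
      rw [lt_div_iff₀ his] at hj2
      nlinarith
    have key2 : 1 / y < (i:ℝ) * th m + t := by
      rw [div_lt_iff₀ hy0]
      rw [div_lt_iff₀ hit] at hj1
      nlinarith
    have hyy : y * (1/y) = 1 := by field_simp
    have hk1 := mul_lt_mul_of_pos_left key1 hy0
    have hk2 := mul_lt_mul_of_pos_left key2 hy0
    rw [hyy] at hk1 hk2
    have hfloor : ⌊1 / (y * th m)⌋₊ = i := by
      rw [Nat.floor_eq_iff (by positivity)]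
      have hyθ : 0 < y * th m := by positivity
      constructor
      · rw [le_div_iff₀ hyθ]
        nlinarith
      · rw [div_lt_iff₀ hyθ]
        nlinarith
    rw [T_eq hm (ne_of_gt hy0), hfloor]
    constructor
    · nlinarith
    · nlinarith

/-- the sets whose measure we track -/

def S (m n : ℕ) (s t : ℝ) : Set ℝ :=
  {x | Irrational x ∧ x ∈ Ioo 0 (th m) ∧ (T m)^[n] x ∈ Ioo s t}

lemma measurable_T : Measurable (T m) := by
  unfold T
  apply Measurable.ite measurableSet_eq measurable_const
  have hg : Measurable fun x : ℝ => 1 / (x * th m) :=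
    measurable_const.div (measurable_id.mul_const _)
  apply Measurable.sub
  · exact measurable_const.div measurable_id
  · exact ((measurable_from_nat.comp (Nat.measurable_floor.comp hg))).const_mul _

lemma measurableSet_irrational : MeasurableSet {x : ℝ | Irrational x} := by
  have : {x : ℝ | Irrational x} = (Set.range ((↑) : ℚ → ℝ))ᶜ := rfl
  rw [this]
  exact (Set.countable_range _).measurableSet.compl

lemma measurableSet_S {n : ℕ} {s t : ℝ} : MeasurableSet (S m n s t) := by
  apply MeasurableSet.inter measurableSet_irrational
  apply MeasurableSet.inter measurableSet_Ioo
  exact (measurable_T.iterate n) measurableSet_Ioo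

lemma S_succ (hm : 2 ≤ m) {n : ℕ} {s t : ℝ} (hs : 0 ≤ s) (hst : s ≤ t) (ht : t ≤ th m) :
    S m (n+1) s t = ⋃ j : ℕ, S m n (u m (m + j) t) (u m (m + j) s) := by
  ext x
  simp only [S, mem_iUnion, mem_setOf_eq]
  constructor
  · rintro ⟨hirr, hx, hT⟩
    rw [Function.iterate_succ_apply'] at hT
    obtain ⟨j, hj⟩ := (branch_iff hm (iter_mem hm hx n) hs hst ht).1 hT
    exact ⟨j, hirr, hx, hj⟩
  · rintro ⟨j, hirr, hx, hj⟩
    refine ⟨hirr, hx, ?_⟩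
    rw [Function.iterate_succ_apply']
    exact (branch_iff hm (iter_mem hm hx n) hs hst ht).2 ⟨j, hj⟩

lemma Ioo_disjoint (hm : 2 ≤ m) {s t : ℝ} (hs : 0 ≤ s) (hst : s ≤ t) (ht : t ≤ th m)
    {i i' : ℕ} (hi : m ≤ i) (hii : i < i') :
    Disjoint (Ioo (u m i t) (u m i s)) (Ioo (u m i' t) (u m i' s)) := by
  have hθ := th_pos hm
  have hi' : m ≤ i' := le_of_lt (lt_of_le_of_lt hi hii)
  apply Set.disjoint_left.2
  rintro x ⟨h1, h2⟩ ⟨h3, h4⟩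
  -- u i' s ≤ u i t : since i' ≥ i+1, u i' s ≤ 1/(i'θ) ≤ 1/((i+1)θ) = u i θ ≤ u i t
  have hkey : u m i' s ≤ u m i t := by
    have h5 : u m i' s ≤ u m i' 0 := u_anti hm hi' le_rfl hs
    have h7 : ((i:ℝ)+1) * th m ≤ (i':ℝ) * th m := by
      have : ((i:ℝ)+1) ≤ i' := by exact_mod_cast hii
      nlinarith
    have hip : (0:ℝ) < i := lt_of_lt_of_le (m_pos hm) (by exact_mod_cast hi)
    have h6 : u m i' 0 ≤ u m i t := by
      rw [u, u]
      apply one_div_le_one_div_of_le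
      · nlinarith
      · nlinarith
    linarith
  linarith

lemma S_disjoint (hm : 2 ≤ m) {n : ℕ} {s t : ℝ} (hs : 0 ≤ s) (hst : s ≤ t) (ht : t ≤ th m) :
    Pairwise (Function.onFun Disjoint fun j : ℕ => S m n (u m (m + j) t) (u m (m + j) s)) := by
  have key : ∀ j j' : ℕ, j < j' →
      Disjoint (S m n (u m (m + j) t) (u m (m + j) s)) (S m n (u m (m + j') t) (u m (m + j') s)) := by
    intro j j' h
    apply Set.disjoint_left.2
    rintro x ⟨_, _, hx1⟩ ⟨_, _, hx2⟩
    exact Set.disjoint_left.1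
      (Ioo_disjoint hm hs hst ht (Nat.le_add_right m j) (by omega)) hx1 hx2
  intro j j' hjj
  rcases lt_or_gt_of_ne hjj with h | h
  · exact key j j' h
  · exact (key j' j h).symm

lemma S_subset {n : ℕ} {s t : ℝ} : S m n s t ⊆ Ioo 0 (th m) := fun _ h => h.2.1

lemma volume_S_ne_top (hm : 2 ≤ m) {n : ℕ} {s t : ℝ} : volume (S m n s t) ≠ ⊤ := by
  apply ne_top_of_le_ne_top _ (measure_mono S_subset)
  simp [Real.volume_Ioo]

lemma volume_S_succ (hm : 2 ≤ m) {n : ℕ} {s t : ℝ} (hs : 0 ≤ s) (hst : s ≤ t) (ht : t ≤ th m) :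
    volume (S m (n+1) s t) = ∑' j : ℕ, volume (S m n (u m (m + j) t) (u m (m + j) s)) := by
  rw [S_succ hm hs hst ht]
  exact measure_iUnion (S_disjoint hm hs hst ht) fun j => measurableSet_S

lemma volume_S_zero (hm : 2 ≤ m) {s t : ℝ} (hs : 0 ≤ s) (hst : s ≤ t) (ht : t ≤ th m) :
    volume (S m 0 s t) = ENNReal.ofReal (t - s) := by
  have h1 : S m 0 s t = Ioo s t \ {x : ℝ | ¬ Irrational x} := by
    ext x
    simp only [S, Function.iterate_zero_apply, mem_diff, mem_setOf_eq, mem_Ioo, not_not]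
    constructor
    · rintro ⟨hirr, _, hx⟩; exact ⟨hx, fun h => hirr h⟩
    · rintro ⟨hx, hrat⟩
      have hθ := th_pos hm
      exact ⟨fun h => hrat h, ⟨lt_of_le_of_lt hs hx.1, lt_of_lt_of_le hx.2 ht⟩, hx⟩
  rw [h1, measure_diff_null, Real.volume_Ioo]
  have : {x : ℝ | ¬ Irrational x} = Set.range ((↑) : ℚ → ℝ) := by
    ext x; simp [Irrational]
  rw [this]
  exact Set.Countable.measure_zero (Set.countable_range _) _

/-- preimages of points are countable. -/

lemma countable_fiber (hm : 2 ≤ m) (n : ℕ) (y : ℝ) :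
    Set.Countable {x : ℝ | Irrational x ∧ (T m)^[n] x = y} := by
  induction n generalizing y with
  | zero =>
    apply Set.Countable.mono _ (Set.countable_singleton y)
    rintro x ⟨_, hx⟩; simpa using hx
  | succ n ih =>
    have hsub : {x : ℝ | Irrational x ∧ (T m)^[n+1] x = y} ⊆
        ⋃ c ∈ ({0} ∪ Set.range (fun i : ℕ => 1 / (y + th m * i)) : Set ℝ),
          {x : ℝ | Irrational x ∧ (T m)^[n] x = c} := by
      rintro x ⟨hirr, hx⟩
      rw [Function.iterate_succ_apply'] at hx
      set z := (T m)^[n] x with hz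
      simp only [mem_iUnion, mem_setOf_eq, mem_union, mem_singleton_iff, mem_range]
      by_cases hz0 : z = 0
      · exact ⟨z, Or.inl hz0, hirr, rfl⟩
      · refine ⟨z, Or.inr ⟨⌊1 / (z * th m)⌋₊, ?_⟩, hirr, rfl⟩
        rw [T, if_neg hz0] at hx
        have hyne : y + th m * ⌊1 / (z * th m)⌋₊ = 1/z := by linarith
        rw [hyne, one_div_one_div]
    apply Set.Countable.mono hsub
    apply Set.Countable.biUnion
    · exact Set.Countable.union (Set.countable_singleton 0) (Set.countable_range _)
    · intro c _; exact ih c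

def G (m : ℕ) (s t : ℝ) : ℝ := Real.log (1 + th m * t) - Real.log (1 + th m * s)

/-- log(1+x) ≤ x for x ≥ 0 (indeed x > -1). -/

lemma log_add_one_le {x : ℝ} (hx : 0 ≤ x) : Real.log (1 + x) ≤ x := by
  have := Real.log_le_sub_one_of_pos (x := 1 + x) (by linarith)
  linarith

/-- x/(1+x) ≤ log(1+x) for x ≥ 0. -/

lemma le_log_add_one {x : ℝ} (hx : 0 ≤ x) : x / (1 + x) ≤ Real.log (1 + x) := by
  have h1 : (0:ℝ) < 1 + x := by linarith
  have h2 := Real.log_le_sub_one_of_pos (x := 1/(1+x)) (by positivity)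
  rw [Real.log_div one_ne_zero (ne_of_gt h1), Real.log_one] at h2
  have : 1 / (1+x) - 1 = -(x/(1+x)) := by field_simp; ring
  rw [this] at h2
  linarith

lemma G_nonneg (hm : 2 ≤ m) {s t : ℝ} (hs : 0 ≤ s) (hst : s ≤ t) : 0 ≤ G m s t := by
  have hθ := th_pos hm
  apply sub_nonneg.2
  apply Real.log_le_log (by nlinarith)
  nlinarith

/-- G bounds in terms of length. -/

lemma G_le (hm : 2 ≤ m) {s t : ℝ} (hs : 0 ≤ s) (hst : s ≤ t) :
    G m s t ≤ th m * (t - s) := by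
  have hθ := th_pos hm
  have h1 : (0:ℝ) < 1 + th m * s := by nlinarith
  have key : G m s t = Real.log (1 + (th m * (t - s)) / (1 + th m * s)) := by
    rw [G, ← Real.log_div (by nlinarith) (ne_of_gt h1)]
    congr 1
    field_simp
    ring
  rw [key]
  have hnum : 0 ≤ th m * (t - s) := by nlinarith
  calc Real.log (1 + th m * (t-s) / (1 + th m * s)) ≤ th m * (t-s) / (1 + th m * s) := by
        apply log_add_one_le; positivity
    _ ≤ th m * (t - s) := div_le_self hnum (by nlinarith)

lemma G_ge (hm : 2 ≤ m) {s t : ℝ} (hs : 0 ≤ s) (hst : s ≤ t) (ht : t ≤ th m) :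
    th m * (t - s) / (1 + th m * th m) ≤ G m s t := by
  have hθ := th_pos hm
  have h1 : (0:ℝ) < 1 + th m * s := by nlinarith
  have h2 : (0:ℝ) < 1 + th m * t := by nlinarith
  have key : G m s t = Real.log (1 + (th m * (t - s)) / (1 + th m * s)) := by
    rw [G, ← Real.log_div (ne_of_gt h2) (ne_of_gt h1)]
    congr 1
    field_simp
    ring
  rw [key]
  have hnum : 0 ≤ th m * (t - s) := by nlinarith
  set x := th m * (t - s) / (1 + th m * s) with hx
  have hx0 : 0 ≤ x := div_nonneg hnum h1.le
  have hstep := le_log_add_one hx0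
  have h1x : 1 + x = (1 + th m * t) / (1 + th m * s) := by
    rw [hx]; field_simp; ring
  have hxx : x / (1 + x) = th m * (t - s) / (1 + th m * t) := by
    rw [hx, h1x, div_div_div_cancel_right₀]
    exact ne_of_gt h1
  calc th m * (t - s) / (1 + th m * th m) ≤ th m * (t - s) / (1 + th m * t) := by
        gcongr <;> nlinarith
    _ = x / (1 + x) := hxx.symm
    _ ≤ Real.log (1 + x) := hstep

lemma iθ_pos (hm : 2 ≤ m) {i : ℕ} (hi : m ≤ i) {s : ℝ} (hs : 0 ≤ s) :
    (0:ℝ) < i * th m + s := by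
  have hθ := th_pos hm
  have : (0:ℝ) < i := lt_of_lt_of_le (m_pos hm) (by exact_mod_cast hi)
  positivity

/-- each branch's G value, as a telescoping difference. -/

lemma G_term (hm : 2 ≤ m) {s t : ℝ} (hs : 0 ≤ s) (hst : s ≤ t) (j : ℕ) :
    G m (u m (m + j) t) (u m (m + j) s) =
      (Real.log ((m+j : ℕ) * th m + t) - Real.log ((m+j : ℕ) * th m + s)) -
      (Real.log ((m+j+1 : ℕ) * th m + t) - Real.log ((m+j+1 : ℕ) * th m + s)) := by
  have hθ := th_pos hm
  set i : ℕ := m + j with hi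
  have him : m ≤ i := Nat.le_add_right m j
  have hps : (0:ℝ) < i * th m + s := iθ_pos hm him hs
  have hpt : (0:ℝ) < i * th m + t := iθ_pos hm him (le_trans hs hst)
  have hps1 : (0:ℝ) < (i+1 : ℕ) * th m + s := iθ_pos hm (by omega) hs
  have hpt1 : (0:ℝ) < (i+1 : ℕ) * th m + t := iθ_pos hm (by omega) (le_trans hs hst)
  have e1 : 1 + th m * u m i s = ((i+1 : ℕ) * th m + s) / (i * th m + s) := by
    rw [u, eq_div_iff (ne_of_gt hps), add_mul, one_mul, mul_assoc, one_div_mul_cancel (ne_of_gt hps)]; push_cast; ring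
  have e2 : 1 + th m * u m i t = ((i+1 : ℕ) * th m + t) / (i * th m + t) := by
    rw [u, eq_div_iff (ne_of_gt hpt), add_mul, one_mul, mul_assoc, one_div_mul_cancel (ne_of_gt hpt)]; push_cast; ring
  rw [G, e1, e2, Real.log_div (ne_of_gt hps1) (ne_of_gt hps),
    Real.log_div (ne_of_gt hpt1) (ne_of_gt hpt)]
  ring

lemma G_hasSum (hm : 2 ≤ m) {s t : ℝ} (hs : 0 ≤ s) (hst : s ≤ t) (ht : t ≤ th m) :
    HasSum (fun j : ℕ => G m (u m (m + j) t) (u m (m + j) s)) (G m s t) := by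
  have hθ := th_pos hm
  set f : ℕ → ℝ := fun j =>
    Real.log ((m+j : ℕ) * th m + t) - Real.log ((m+j : ℕ) * th m + s) with hf
  have hterm : ∀ j, G m (u m (m + j) t) (u m (m + j) s) = f j - f (j+1) := by
    intro j
    rw [G_term hm hs hst j, hf]
    simp only []
    congr 2 <;> · push_cast; ring_nf
  have hnonneg : ∀ j, 0 ≤ G m (u m (m + j) t) (u m (m + j) s) := fun j =>
    G_nonneg hm (le_of_lt (u_pos hm (Nat.le_add_right m j) (le_trans hs hst)))
      (u_anti hm (Nat.le_add_right m j) hs hst)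
  rw [hasSum_iff_tendsto_nat_of_nonneg hnonneg]
  have hsum : ∀ N : ℕ, ∑ j ∈ Finset.range N, G m (u m (m + j) t) (u m (m + j) s)
      = f 0 - f N := by
    intro N
    rw [Finset.sum_congr rfl fun j _ => hterm j]
    exact Finset.sum_range_sub' f N
  have hf0 : f 0 = G m s t := by
    have hmθ : (m:ℝ) * th m + t = (1 + th m * t) / th m := by
      rw [← one_div_th hm]; field_simp
    have hmθ' : (m:ℝ) * th m + s = (1 + th m * s) / th m := by
      rw [← one_div_th hm]; field_simp
    have h1 : (0:ℝ) < 1 + th m * t := by nlinarith [le_trans hs hst]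
    have h2 : (0:ℝ) < 1 + th m * s := by nlinarith
    rw [hf]
    simp only [Nat.add_zero]
    rw [hmθ, hmθ', Real.log_div (ne_of_gt h1) (ne_of_gt hθ),
      Real.log_div (ne_of_gt h2) (ne_of_gt hθ), G]
    ring
  -- f N → 0
  have hfN : Tendsto f atTop (nhds 0) := by
    have hb : ∀ N : ℕ, f N ∈ Icc 0 ((t - s) / ((m+N : ℕ) * th m + s)) := by
      intro N
      have him : m ≤ m + N := Nat.le_add_right m N
      have hps : (0:ℝ) < (m+N : ℕ) * th m + s := iθ_pos hm him hs
      have hpt : (0:ℝ) < (m+N : ℕ) * th m + t := iθ_pos hm him (le_trans hs hst)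
      constructor
      · apply sub_nonneg.2
        apply Real.log_le_log hps
        linarith
      · have e : f N = Real.log (1 + (t - s) / ((m+N : ℕ) * th m + s)) := by
          rw [hf]
          simp only []
          rw [← Real.log_div (ne_of_gt hpt) (ne_of_gt hps)]
          congr 1
          field_simp
          ring
        rw [e]
        exact log_add_one_le (div_nonneg (by linarith) hps.le)
    have hub : Tendsto (fun N : ℕ => (t - s) / ((m+N : ℕ) * th m + s)) atTop (nhds 0) := by
      apply Tendsto.div_atTop tendsto_const_nhds
      have h1 : Tendsto (fun N : ℕ => ((m+N : ℕ) : ℝ)) atTop atTop := by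
        apply tendsto_natCast_atTop_atTop.comp
        simpa [Nat.add_comm] using tendsto_add_atTop_nat m
      exact tendsto_atTop_add_const_right _ s (h1.atTop_mul_const hθ)
    exact tendsto_of_tendsto_of_tendsto_of_le_of_le tendsto_const_nhds hub
      (fun N => (hb N).1) (fun N => (hb N).2)
  have h2 : Tendsto (fun N => f 0 - f N) atTop (nhds (f 0 - 0)) :=
    tendsto_const_nhds.sub hfN
  rw [sub_zero] at h2
  simp only [hsum]
  rw [← hf0]
  exact h2

/-- The main distortion bounds, by induction on n. -/

lemma key_bounds (hm : 2 ≤ m) : ∀ n : ℕ, ∀ s t : ℝ, 0 ≤ s → s ≤ t → t ≤ th m →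
    (1 / th m) * G m s t ≤ (volume (S m n s t)).toReal ∧
    (volume (S m n s t)).toReal ≤ ((1 + th m * th m) / th m) * G m s t := by
  intro n
  induction n with
  | zero =>
    intro s t hs hst ht
    have hθ := th_pos hm
    rw [volume_S_zero hm hs hst ht, ENNReal.toReal_ofReal (by linarith)]
    constructor
    · have := G_le hm hs hst
      calc (1 / th m) * G m s t ≤ (1 / th m) * (th m * (t - s)) := by
            apply mul_le_mul_of_nonneg_left this (by positivity)
        _ = t - s := by field_simp
    · have := G_ge hm hs hst ht
      have h2 : (0:ℝ) < 1 + th m * th m := by nlinarith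
      calc t - s = ((1 + th m * th m) / th m) * (th m * (t - s) / (1 + th m * th m)) := by
            field_simp
        _ ≤ ((1 + th m * th m) / th m) * G m s t := by
            apply mul_le_mul_of_nonneg_left this (by positivity)
  | succ n ih =>
    intro s t hs hst ht
    have hθ := th_pos hm
    -- hypotheses for each branch interval
    have hbr : ∀ j : ℕ, 0 ≤ u m (m + j) t ∧ u m (m + j) t ≤ u m (m + j) s ∧
        u m (m + j) s ≤ th m := fun j =>
      ⟨(u_pos hm (Nat.le_add_right m j) (le_trans hs hst)).le,
       u_anti hm (Nat.le_add_right m j) hs hst,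
       u_le_th hm (Nat.le_add_right m j) hs⟩
    have hIH : ∀ j : ℕ,
        (1 / th m) * G m (u m (m + j) t) (u m (m + j) s)
          ≤ (volume (S m n (u m (m + j) t) (u m (m + j) s))).toReal ∧
        (volume (S m n (u m (m + j) t) (u m (m + j) s))).toReal
          ≤ ((1 + th m * th m) / th m) * G m (u m (m + j) t) (u m (m + j) s) :=
      fun j => ih _ _ (hbr j).1 (hbr j).2.1 (hbr j).2.2
    have hGsum := G_hasSum hm hs hst ht
    have htsum_ne : ∑' j : ℕ, volume (S m n (u m (m + j) t) (u m (m + j) s)) ≠ ⊤ := by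
      rw [← volume_S_succ hm hs hst ht]; exact volume_S_ne_top hm
    have hV : (volume (S m (n+1) s t)).toReal
        = ∑' j : ℕ, (volume (S m n (u m (m + j) t) (u m (m + j) s))).toReal := by
      rw [volume_S_succ hm hs hst ht]
      exact ENNReal.tsum_toReal_eq fun j => volume_S_ne_top hm
    have hVsummable : Summable fun j : ℕ =>
        (volume (S m n (u m (m + j) t) (u m (m + j) s))).toReal :=
      ENNReal.summable_toReal htsum_ne
    constructor
    · rw [hV]
      have h1 : HasSum (fun j : ℕ => (1 / th m) * G m (u m (m + j) t) (u m (m + j) s))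
          ((1 / th m) * G m s t) := hGsum.mul_left _
      rw [← h1.tsum_eq]
      exact Summable.tsum_le_tsum (fun j => (hIH j).1) h1.summable hVsummable
    · rw [hV]
      have h1 : HasSum (fun j : ℕ =>
          ((1 + th m * th m) / th m) * G m (u m (m + j) t) (u m (m + j) s))
          (((1 + th m * th m) / th m) * G m s t) := hGsum.mul_left _
      rw [← h1.tsum_eq]
      exact Summable.tsum_le_tsum (fun j => (hIH j).2) hVsummable h1.summable
end Aux

section Aux2
variable {m : ℕ}

lemma digit_iff (hm : 2 ≤ m) {k : ℕ} (hk : m ≤ k) {y : ℝ} (hy : y ∈ Ico 0 (th m)) :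
    ⌊1 / (y * th m)⌋₊ = k ↔ (u m (k+1) 0 < y ∧ y ≤ u m k 0) := by
  have hθ := th_pos hm
  have hk0 : (0:ℝ) < k := lt_of_lt_of_le (m_pos hm) (by exact_mod_cast hk)
  have hα : (0:ℝ) < (k+1:ℕ) * th m + 0 := by push_cast; nlinarith
  have hβ : (0:ℝ) < (k:ℕ) * th m + 0 := by push_cast; nlinarith
  rcases eq_or_lt_of_le hy.1 with h0 | h0
  · constructor
    · intro h; exfalso; rw [← h0] at h; simp at h; omega
    · rintro ⟨h1, _⟩; exfalso; rw [u] at h1; rw [← h0] at h1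
      exact absurd h1 (not_lt.2 (by positivity))
  · have hyθ : 0 < y * th m := by positivity
    rw [Nat.floor_eq_iff (by positivity), u, u]
    constructor
    · rintro ⟨h1, h2⟩
      rw [le_div_iff₀ hyθ] at h1
      rw [div_lt_iff₀ hyθ] at h2
      constructor
      · rw [div_lt_iff₀ hα]; push_cast; nlinarith
      · rw [le_div_iff₀ hβ]; push_cast; nlinarith
    · rintro ⟨h1, h2⟩
      rw [div_lt_iff₀ hα] at h1
      rw [le_div_iff₀ hβ] at h2
      constructor
      · rw [le_div_iff₀ hyθ]; push_cast at h2 ⊢; nlinarith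
      · rw [div_lt_iff₀ hyθ]; push_cast at h1 ⊢; nlinarith

lemma volume_digit (hm : 2 ≤ m) (n : ℕ) {k : ℕ} (hk : m ≤ k) :
    volume {x | x ∈ Omega m ∧ a m (n + 1) x = k}
      = volume (S m n (u m (k+1) 0) (u m k 0)) := by
  have ha : ∀ x : ℝ, a m (n+1) x = ⌊1 / ((T m)^[n] x * th m)⌋₊ := by
    intro x; rw [a]; norm_num
  apply le_antisymm
  · have hsub : {x | x ∈ Omega m ∧ a m (n + 1) x = k}
        ⊆ S m n (u m (k+1) 0) (u m k 0) ∪ {x : ℝ | Irrational x ∧ (T m)^[n] x = u m k 0} := by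
      rintro x ⟨⟨hx, hirr⟩, hd⟩
      rw [ha x, digit_iff hm hk (iter_mem hm hx n)] at hd
      rcases eq_or_lt_of_le hd.2 with he | he
      · exact Or.inr ⟨hirr, he⟩
      · exact Or.inl ⟨hirr, hx, hd.1, he⟩
    calc volume {x | x ∈ Omega m ∧ a m (n + 1) x = k}
        ≤ volume (S m n (u m (k+1) 0) (u m k 0) ∪ {x : ℝ | Irrational x ∧ (T m)^[n] x = u m k 0}) :=
          measure_mono hsub
      _ ≤ volume (S m n (u m (k+1) 0) (u m k 0))
          + volume {x : ℝ | Irrational x ∧ (T m)^[n] x = u m k 0} := measure_union_le _ _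
      _ = volume (S m n (u m (k+1) 0) (u m k 0)) := by
          rw [Set.Countable.measure_zero (countable_fiber hm n _) volume, add_zero]
  · apply measure_mono
    rintro x ⟨hirr, hx, h1, h2⟩
    refine ⟨⟨hx, hirr⟩, ?_⟩
    rw [ha x, digit_iff hm hk (iter_mem hm hx n)]
    exact ⟨h1, le_of_lt h2⟩


end Aux2

set_option maxHeartbeats 1000000 in
/-- 1/(6k²) < λ_θ({x ∈ Ω : a_{n+1}(x) = k}) < (m+1)/k². -/
theorem stmt_7 (m : ℕ) (hm : 2 ≤ m) (n : ℕ) (k : ℕ) (hk : m ≤ k) :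
    1 / (6 * (k : ℝ) ^ 2) < lam m {x | x ∈ Omega m ∧ a m (n + 1) x = k} ∧
      lam m {x | x ∈ Omega m ∧ a m (n + 1) x = k} < ((m : ℝ) + 1) / (k : ℝ) ^ 2 := by
  have hθ := th_pos hm
  have hmr : (2:ℝ) ≤ m := by exact_mod_cast hm
  have hkr : (m:ℝ) ≤ k := by exact_mod_cast hk
  have hk0 : (0:ℝ) < k := by linarith
  set α := u m (k+1) 0 with hα
  set β := u m k 0 with hβ
  have hα0 : 0 ≤ α := (u_pos hm (by omega) le_rfl).le
  have hαβ : α ≤ β := by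
    rw [hα, hβ, u, u]
    apply one_div_le_one_div_of_le
    · push_cast; nlinarith
    · push_cast; nlinarith
  have hβθ : β ≤ th m := u_le_th hm hk le_rfl
  have hkey := key_bounds hm n α β hα0 hαβ hβθ
  set V := (volume (S m n α β)).toReal with hV
  have hlam : lam m {x | x ∈ Omega m ∧ a m (n + 1) x = k} = V / th m := by
    rw [lam, volume_digit hm n hk]
  -- G value
  set x : ℝ := 1 / ((k:ℝ) * (k+2)) with hxd
  have hx0 : 0 < x := by rw [hxd]; positivity
  have hθβ : th m * β = 1/(k:ℝ) := by
    rw [hβ, u]; push_cast; rw [add_zero]; field_simp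
  have hθα : th m * α = 1/((k:ℝ)+1) := by
    rw [hα, u]; push_cast; rw [add_zero]; field_simp
  have hG : G m α β = Real.log (1 + x) := by
    rw [G, hθβ, hθα, hxd]
    have e1 : 1 + 1/(k:ℝ) = ((k:ℝ)+1)/k := by field_simp
    have e2 : 1 + 1/((k:ℝ)+1) = ((k:ℝ)+2)/((k:ℝ)+1) := by field_simp; ring
    have e3 : 1 + 1 / ((k:ℝ) * (k+2)) = ((k:ℝ)+1)^2/((k:ℝ)*((k:ℝ)+2)) := by
      field_simp; ring
    rw [e1, e2, e3, Real.log_div (by positivity) (by positivity),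
      Real.log_div (by positivity) (by positivity),
      Real.log_div (by positivity) (by positivity),
      Real.log_mul (by positivity) (by positivity), Real.log_pow]
    ring
  -- convert key bounds
  have hθθ := th_sq hm
  have hm0 : (m:ℝ) ≠ 0 := by linarith
  have hlow : (m:ℝ) * G m α β ≤ V / th m := by
    have h1 : ((1 / th m) * G m α β) / th m ≤ V / th m :=
      div_le_div_of_nonneg_right hkey.1 hθ.le
    have h2 : ((1 / th m) * G m α β) / th m = G m α β * (1/(th m * th m)) := by ring
    rw [h2, hθθ, one_div_one_div] at h1
    linarith [h1]
  have hhigh : V / th m ≤ ((m:ℝ) + 1) * G m α β := by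
    have h1 : V / th m ≤ (((1 + th m * th m) / th m) * G m α β) / th m :=
      div_le_div_of_nonneg_right hkey.2 hθ.le
    have h2 : (((1 + th m * th m) / th m) * G m α β) / th m
        = G m α β * ((1 + th m * th m) * (1/(th m * th m))) := by ring
    rw [h2, hθθ, one_div_one_div] at h1
    have h3 : (1 + 1/(m:ℝ)) * m = (m:ℝ) + 1 := by field_simp
    calc V / th m ≤ G m α β * ((1 + 1/(m:ℝ)) * m) := h1
      _ = ((m:ℝ) + 1) * G m α β := by rw [h3]; ring
  -- strict log bounds
  have hlog_lt : Real.log (1 + x) < x := by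
    have := Real.log_lt_sub_one_of_pos (x := 1 + x) (by linarith) (by linarith)
    linarith
  have hlog_gt : x / (1 + x) < Real.log (1 + x) := by
    have h1 : (0:ℝ) < 1 + x := by linarith
    have h2 := Real.log_lt_sub_one_of_pos (x := 1/(1+x)) (by positivity)
      (by intro hcon; rw [div_eq_one_iff_eq (by linarith)] at hcon; linarith)
    rw [Real.log_div one_ne_zero (ne_of_gt h1), Real.log_one] at h2
    have h3 : 1 / (1+x) - 1 = -(x/(1+x)) := by field_simp; ring
    rw [h3] at h2
    linarith
  have hxx : x / (1 + x) = 1 / ((k:ℝ)+1)^2 := by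
    have h1 : (k:ℝ)*(k+2) ≠ 0 := by positivity
    have h2 : (0:ℝ) < 1 + x := by linarith
    rw [hxd] at *
    field_simp
    ring
  constructor
  · rw [hlam]
    calc 1 / (6 * (k:ℝ)^2) < (m:ℝ) * (1 / ((k:ℝ)+1)^2) := by
          have h2k : (2:ℝ) ≤ k := le_trans hmr hkr
          rw [mul_one_div, div_lt_div_iff₀ (by positivity) (by positivity)]
          nlinarith
      _ = (m:ℝ) * (x / (1+x)) := by rw [hxx]
      _ < (m:ℝ) * Real.log (1 + x) := by
          apply mul_lt_mul_of_pos_left hlog_gt (by linarith)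
      _ = (m:ℝ) * G m α β := by rw [hG]
      _ ≤ V / th m := hlow
  · rw [hlam]
    calc V / th m ≤ ((m:ℝ)+1) * G m α β := hhigh
      _ = ((m:ℝ)+1) * Real.log (1 + x) := by rw [hG]
      _ < ((m:ℝ)+1) * x := by
          apply mul_lt_mul_of_pos_left hlog_lt (by linarith)
      _ < ((m:ℝ) + 1) / (k:ℝ)^2 := by
          rw [hxd, mul_one_div, div_lt_div_iff₀ (by positivity) (by positivity)]
          nlinarith
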